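/- arXiv:2002.07944 — 2 statements merged into one kernel-verified Lean document; each statement's English description precedes it below -/
import Mathlib

section
/- If A ⇒ B ≡ C ⇒ D, where ≡ is the congruence generated by the distributivity isomorphism, then A ≡ C and B ≡ D. -/
inductive Tm : Type
| var : ℕ → Tm
| lam : Tm → Tm
| app : Tm → Tm → Tm
| pair : Tm → Tm → Tm
| p1 : Tm → Tm
| p2 : Tm → Tm

namespace Tm

/-- Renaming of de Bruijn indices. -/
def rename (f : ℕ → ℕ) : Tm → Tm
| var n => var (f n)
| lam t => lam (t.rename (fun n => match n with | 0 => 0 | n+1 => f n + 1))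
| app t s => app (t.rename f) (s.rename f)
| pair t s => pair (t.rename f) (s.rename f)
| p1 t => p1 (t.rename f)
| p2 t => p2 (t.rename f)

/-- Capture-avoiding simultaneous substitution. -/
def subst (σ : ℕ → Tm) : Tm → Tm
| var n => σ n
| lam t => lam (t.subst (fun n => match n with | 0 => var 0 | n+1 => (σ n).rename Nat.succ))
| app t s => app (t.subst σ) (s.subst σ)
| pair t s => pair (t.subst σ) (s.subst σ)
| p1 t => p1 (t.subst σ)
| p2 t => p2 (t.subst σ)

/-- Substitution of the single (outermost) free variable: t[x := s]. -/
def subst1 (t s : Tm) : Tm :=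
  t.subst (fun n => match n with | 0 => s | n+1 => var n)

/-- One-step reduction of the distributive λ-calculus. -/
inductive Step : Tm → Tm → Prop
| beta (t s) : Step (app (lam t) s) (t.subst1 s)
| proj1 (t1 t2) : Step (p1 (pair t1 t2)) t1
| proj2 (t1 t2) : Step (p2 (pair t1 t2)) t2
| pairApp (t s u) : Step (app (pair t s) u) (pair (app t u) (app s u))
| projLam1 (t) : Step (p1 (lam t)) (lam (p1 t))
| projLam2 (t) : Step (p2 (lam t)) (lam (p2 t))
| lam_cong {t t'} : Step t t' → Step (lam t) (lam t')
| appL {t t' s} : Step t t' → Step (app t s) (app t' s)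
| appR {t s s'} : Step s s' → Step (app t s) (app t s')
| pairL {t t' s} : Step t t' → Step (pair t s) (pair t' s)
| pairR {t s s'} : Step s s' → Step (pair t s) (pair t s')
| p1_cong {t t'} : Step t t' → Step (p1 t) (p1 t')
| p2_cong {t t'} : Step t t' → Step (p2 t) (p2 t')

/-- Many-step reduction. -/
def Steps : Tm → Tm → Prop := Relation.ReflTransGen Step

/-- A term is normal when no rule applies anywhere in it. -/
def Normal (t : Tm) : Prop := ¬ ∃ s, Step t s

/-- All free variables are < k. -/
def closedUnder : ℕ → Tm → Prop
| k, var n => n < k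
| k, lam t => closedUnder (k+1) t
| k, app t s => closedUnder k t ∧ closedUnder k s
| k, pair t s => closedUnder k t ∧ closedUnder k s
| k, p1 t => closedUnder k t
| k, p2 t => closedUnder k t

def Closed (t : Tm) : Prop := closedUnder 0 t

/-- Values: variables, abstractions, pairs. -/
def IsValue : Tm → Prop
| var _ => True
| lam _ => True
| pair _ _ => True
| _ => False

/-- Neutral terms: variables, applications, projections. -/
def Neutral : Tm → Prop
| var _ => True
| app _ _ => True
| p1 _ => True
| p2 _ => True
| _ => False

/-- Strong normalization: every reduction sequence is finite. -/
def SN (t : Tm) : Prop := Acc (fun a b => Step b a) t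

end Tm

inductive Ty : Type
| base : Ty
| arr : Ty → Ty → Ty
| conj : Ty → Ty → Ty

/-- The least congruence containing distributivity A ⇒ (B ∧ C) ≡ (A ⇒ B) ∧ (A ⇒ C). -/
inductive Iso : Ty → Ty → Prop
| refl (A) : Iso A A
| symm {A B} : Iso A B → Iso B A
| trans {A B C} : Iso A B → Iso B C → Iso A C
| distr (A B C) : Iso (Ty.arr A (Ty.conj B C)) (Ty.conj (Ty.arr A B) (Ty.arr A C))
| arrL {A C} (B) : Iso A C → Iso (Ty.arr A B) (Ty.arr C B)
| arrR {B C} (A) : Iso B C → Iso (Ty.arr A B) (Ty.arr A C)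
| conjL {A C} (B) : Iso A C → Iso (Ty.conj A B) (Ty.conj C B)
| conjR {B C} (A) : Iso B C → Iso (Ty.conj A B) (Ty.conj A C)

/-- Typing, with contexts as lists of types (de Bruijn), including the conversion rule for ≡. -/
inductive Typing : List Ty → Tm → Ty → Prop
| var {Γ n A} : Γ[n]? = some A → Typing Γ (Tm.var n) A
| lam {Γ t A B} : Typing (A :: Γ) t B → Typing Γ (Tm.lam t) (Ty.arr A B)
| app {Γ t s A B} : Typing Γ t (Ty.arr A B) → Typing Γ s A → Typing Γ (Tm.app t s) B
| pair {Γ t s A B} : Typing Γ t A → Typing Γ s B → Typing Γ (Tm.pair t s) (Ty.conj A B)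
| p1 {Γ t A B} : Typing Γ t (Ty.conj A B) → Typing Γ (Tm.p1 t) A
| p2 {Γ t A B} : Typing Γ t (Ty.conj A B) → Typing Γ (Tm.p2 t) B
| iso {Γ t A B} : Typing Γ t A → Iso A B → Typing Γ t B

/-- Reducibility interpretation of types. -/
def Red : Ty → Tm → Prop
| Ty.base, t => Tm.SN t
| Ty.arr A B, t => ∀ s, Red A s → Red B (Tm.app t s)
| Ty.conj A B, t => Red A (Tm.p1 t) ∧ Red B (Tm.p2 t)

/-- Push conjunctions out of arrow codomains. -/
def Ty.push (a : Ty) : Ty → Ty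
| .conj b c => .conj (Ty.push a b) (Ty.push a c)
| b => .arr a b

@[simp] lemma Ty.push_base (a : Ty) : Ty.push a Ty.base = Ty.arr a Ty.base := rfl
@[simp] lemma Ty.push_arr (a x y : Ty) :
    Ty.push a (Ty.arr x y) = Ty.arr a (Ty.arr x y) := rfl
@[simp] lemma Ty.push_conj (a b c : Ty) :
    Ty.push a (Ty.conj b c) = Ty.conj (Ty.push a b) (Ty.push a c) := rfl

/-- Full normalization. -/
def Ty.nf : Ty → Ty
| .base => .base
| .conj a b => .conj a.nf b.nf
| .arr a b => Ty.push a.nf b.nf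

lemma iso_push (a b : Ty) : Iso (Ty.arr a b) (Ty.push a b) := by
  induction b generalizing a with
  | base => exact Iso.refl _
  | arr x y _ _ => exact Iso.refl _
  | conj x y ihx ihy =>
      exact Iso.trans (Iso.distr a x y)
        (Iso.trans (Iso.conjL _ (ihx a)) (Iso.conjR _ (ihy a)))

lemma iso_nf (a : Ty) : Iso a a.nf := by
  induction a with
  | base => exact Iso.refl _
  | arr x y ihx ihy =>
      exact Iso.trans (Iso.trans (Iso.arrL _ ihx) (Iso.arrR _ ihy)) (iso_push _ _)
  | conj x y ihx ihy => exact Iso.trans (Iso.conjL _ ihx) (Iso.conjR _ ihy)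

lemma iso_nf_eq {a b : Ty} (h : Iso a b) : a.nf = b.nf := by
  induction h with
  | refl => rfl
  | symm _ ih => exact ih.symm
  | trans _ _ ih1 ih2 => exact ih1.trans ih2
  | distr A B C => simp [Ty.nf]
  | arrL B _ ih => simp [Ty.nf, ih]
  | arrR A _ ih => simp [Ty.nf, ih]
  | conjL B _ ih => simp [Ty.nf, ih]
  | conjR A _ ih => simp [Ty.nf, ih]

lemma push_inj {a b c d : Ty} (h : Ty.push a b = Ty.push c d) : a = c ∧ b = d := by
  induction b generalizing d with
  | conj b1 b2 ih1 ih2 =>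
      cases d with
      | conj d1 d2 =>
          simp only [Ty.push_conj, Ty.conj.injEq] at h
          obtain ⟨h1, h2⟩ := h
          obtain ⟨e1, e2⟩ := ih1 h1
          obtain ⟨e3, e4⟩ := ih2 h2
          exact ⟨e1, by rw [e2, e4]⟩
      | base => simp at h
      | arr _ _ => simp at h
  | base =>
      cases d with
      | conj _ _ => simp at h
      | base => simpa using h
      | arr _ _ => simp at h
  | arr x y _ _ =>
      cases d with
      | conj _ _ => simp at h
      | base => simp at h
      | arr _ _ =>
          simp only [Ty.push_arr, Ty.arr.injEq] at h
          exact ⟨h.1, by rw [h.2.1, h.2.2]⟩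

theorem iso_arr_arr (A B C D : Ty) (h : Iso (Ty.arr A B) (Ty.arr C D)) :
    Iso A C ∧ Iso B D := by
  have h' := iso_nf_eq h
  simp only [Ty.nf] at h'
  obtain ⟨h1, h2⟩ := push_inj h'
  exact ⟨Iso.trans (iso_nf A) (Iso.symm (h1 ▸ iso_nf C)),
         Iso.trans (iso_nf B) (Iso.symm (h2 ▸ iso_nf D))⟩
end

section
/- If t and s are strongly normalizing and t[x:=s] ∈ ⟦A⟧, then (λx.t)s ∈ ⟦A⟧. -/
namespace Tm

lemma rename_rename (t : Tm) : ∀ f g, (t.rename f).rename g = t.rename (fun n => g (f n)) := by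
  induction t with
  | var n => intros; rfl
  | lam t ih =>
    intro f g
    simp only [rename, ih]
    congr 1
    congr 1
    funext n; cases n <;> rfl
  | app t s iht ihs => intro f g; simp [rename, iht, ihs]
  | pair t s iht ihs => intro f g; simp [rename, iht, ihs]
  | p1 t ih => intro f g; simp [rename, ih]
  | p2 t ih => intro f g; simp [rename, ih]

lemma subst_rename (t : Tm) : ∀ f σ, (t.rename f).subst σ = t.subst (fun n => σ (f n)) := by
  induction t with
  | var n => intros; rfl
  | lam t ih =>
    intro f σ
    simp only [rename, subst, ih]
    congr 1
    congr 1
    funext n; cases n <;> rfl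
  | app t s iht ihs => intro f σ; simp [rename, subst, iht, ihs]
  | pair t s iht ihs => intro f σ; simp [rename, subst, iht, ihs]
  | p1 t ih => intro f σ; simp [rename, subst, ih]
  | p2 t ih => intro f σ; simp [rename, subst, ih]

lemma rename_subst (t : Tm) : ∀ σ f, (t.subst σ).rename f = t.subst (fun n => (σ n).rename f) := by
  induction t with
  | var n => intros; rfl
  | lam t ih =>
    intro σ f
    simp only [rename, subst, ih]
    congr 1
    congr 1
    funext n
    cases n with
    | zero => rfl
    | succ n => simp [rename_rename]
  | app t s iht ihs => intro σ f; simp [rename, subst, iht, ihs]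
  | pair t s iht ihs => intro σ f; simp [rename, subst, iht, ihs]
  | p1 t ih => intro σ f; simp [rename, subst, ih]
  | p2 t ih => intro σ f; simp [rename, subst, ih]

lemma subst_subst (t : Tm) : ∀ σ τ, (t.subst σ).subst τ = t.subst (fun n => (σ n).subst τ) := by
  induction t with
  | var n => intros; rfl
  | lam t ih =>
    intro σ τ
    simp only [subst, ih]
    congr 1
    congr 1
    funext n
    cases n with
    | zero => rfl
    | succ n => simp [subst_rename, rename_subst]
  | app t s iht ihs => intro σ τ; simp [subst, iht, ihs]
  | pair t s iht ihs => intro σ τ; simp [subst, iht, ihs]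
  | p1 t ih => intro σ τ; simp [subst, ih]
  | p2 t ih => intro σ τ; simp [subst, ih]

lemma subst_var (t : Tm) : t.subst var = t := by
  induction t with
  | var n => rfl
  | lam t ih =>
    simp only [subst]
    congr 1
    have : (fun n => match n with | 0 => var 0 | n+1 => (var n).rename Nat.succ)
        = (var : ℕ → Tm) := by funext n; cases n <;> rfl
    rw [this, ih]
  | app t s iht ihs => simp [subst, iht, ihs]
  | pair t s iht ihs => simp [subst, iht, ihs]
  | p1 t ih => simp [subst, ih]
  | p2 t ih => simp [subst, ih]

lemma subst1_rename (t s : Tm) (f : ℕ → ℕ) :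
    (t.subst1 s).rename f
      = (t.rename (fun n => match n with | 0 => 0 | n+1 => f n + 1)).subst1 (s.rename f) := by
  simp only [subst1, rename_subst, subst_rename]
  congr 1
  funext n; cases n <;> rfl

lemma subst1_subst (t s : Tm) (σ : ℕ → Tm) :
    (t.subst1 s).subst σ
      = (t.subst (fun n => match n with | 0 => var 0 | n+1 => (σ n).rename Nat.succ)).subst1
          (s.subst σ) := by
  simp only [subst1, subst_subst]
  congr 1
  funext n
  cases n with
  | zero => rfl
  | succ n =>
    show σ n = ((σ n).rename Nat.succ).subst _
    rw [subst_rename, subst_var]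

lemma step_rename {t t' : Tm} (h : Step t t') : ∀ f, Step (t.rename f) (t'.rename f) := by
  induction h with
  | beta t s => intro f; rw [subst1_rename]; exact Step.beta _ _
  | proj1 t1 t2 => intro f; exact Step.proj1 _ _
  | proj2 t1 t2 => intro f; exact Step.proj2 _ _
  | pairApp t s u => intro f; exact Step.pairApp _ _ _
  | projLam1 t => intro f; exact Step.projLam1 _
  | projLam2 t => intro f; exact Step.projLam2 _
  | lam_cong _ ih => intro f; exact Step.lam_cong (ih _)
  | appL _ ih => intro f; exact Step.appL (ih _)
  | appR _ ih => intro f; exact Step.appR (ih _)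
  | pairL _ ih => intro f; exact Step.pairL (ih _)
  | pairR _ ih => intro f; exact Step.pairR (ih _)
  | p1_cong _ ih => intro f; exact Step.p1_cong (ih _)
  | p2_cong _ ih => intro f; exact Step.p2_cong (ih _)

lemma step_subst {t t' : Tm} (h : Step t t') : ∀ σ, Step (t.subst σ) (t'.subst σ) := by
  induction h with
  | beta t s => intro σ; rw [subst1_subst]; exact Step.beta _ _
  | proj1 t1 t2 => intro σ; exact Step.proj1 _ _
  | proj2 t1 t2 => intro σ; exact Step.proj2 _ _
  | pairApp t s u => intro σ; exact Step.pairApp _ _ _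
  | projLam1 t => intro σ; exact Step.projLam1 _
  | projLam2 t => intro σ; exact Step.projLam2 _
  | lam_cong _ ih => intro σ; exact Step.lam_cong (ih _)
  | appL _ ih => intro σ; exact Step.appL (ih _)
  | appR _ ih => intro σ; exact Step.appR (ih _)
  | pairL _ ih => intro σ; exact Step.pairL (ih _)
  | pairR _ ih => intro σ; exact Step.pairR (ih _)
  | p1_cong _ ih => intro σ; exact Step.p1_cong (ih _)
  | p2_cong _ ih => intro σ; exact Step.p2_cong (ih _)

lemma step_subst1_left {t t' : Tm} (s : Tm) (h : Step t t') :
    Step (t.subst1 s) (t'.subst1 s) := step_subst h _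

lemma steps_rename {t t' : Tm} (h : Steps t t') (f : ℕ → ℕ) :
    Steps (t.rename f) (t'.rename f) :=
  Relation.ReflTransGen.lift (p := Step) (fun u : Tm => rename f u) (fun _ _ hs => step_rename hs f) _ _ h

lemma steps_lam {t t' : Tm} (h : Steps t t') : Steps (lam t) (lam t') :=
  Relation.ReflTransGen.lift lam (fun _ _ hs => Step.lam_cong hs) _ _ h

lemma steps_appL {t t' s : Tm} (h : Steps t t') : Steps (app t s) (app t' s) :=
  Relation.ReflTransGen.lift (fun u => app u s) (fun _ _ hs => Step.appL hs) _ _ h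

lemma steps_appR {t s s' : Tm} (h : Steps s s') : Steps (app t s) (app t s') :=
  Relation.ReflTransGen.lift (fun u => app t u) (fun _ _ hs => Step.appR hs) _ _ h

lemma steps_pairL {t t' s : Tm} (h : Steps t t') : Steps (pair t s) (pair t' s) :=
  Relation.ReflTransGen.lift (fun u => pair u s) (fun _ _ hs => Step.pairL hs) _ _ h

lemma steps_pairR {t s s' : Tm} (h : Steps s s') : Steps (pair t s) (pair t s') :=
  Relation.ReflTransGen.lift (fun u => pair t u) (fun _ _ hs => Step.pairR hs) _ _ h

lemma steps_p1 {t t' : Tm} (h : Steps t t') : Steps (p1 t) (p1 t') :=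
  Relation.ReflTransGen.lift p1 (fun _ _ hs => Step.p1_cong hs) _ _ h

lemma steps_p2 {t t' : Tm} (h : Steps t t') : Steps (p2 t) (p2 t') :=
  Relation.ReflTransGen.lift p2 (fun _ _ hs => Step.p2_cong hs) _ _ h

lemma subst_steps (t : Tm) : ∀ σ σ', (∀ n, Steps (σ n) (σ' n)) →
    Steps (t.subst σ) (t.subst σ') := by
  induction t with
  | var n => intro σ σ' h; exact h n
  | lam t ih =>
    intro σ σ' h
    apply steps_lam
    apply ih
    intro n
    cases n with
    | zero => exact Relation.ReflTransGen.refl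
    | succ n => exact steps_rename (h n) _
  | app t s iht ihs =>
    intro σ σ' h
    exact Relation.ReflTransGen.trans (steps_appL (iht _ _ h)) (steps_appR (ihs _ _ h))
  | pair t s iht ihs =>
    intro σ σ' h
    exact Relation.ReflTransGen.trans (steps_pairL (iht _ _ h)) (steps_pairR (ihs _ _ h))
  | p1 t ih => intro σ σ' h; exact steps_p1 (ih _ _ h)
  | p2 t ih => intro σ σ' h; exact steps_p2 (ih _ _ h)

lemma steps_subst1_right (t : Tm) {s s' : Tm} (h : Steps s s') :
    Steps (t.subst1 s) (t.subst1 s') := by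
  apply subst_steps
  intro n
  cases n with
  | zero => exact h
  | succ n => exact Relation.ReflTransGen.refl

lemma sn_step {t t' : Tm} (h : SN t) (hs : Step t t') : SN t' := h.inv hs

lemma sn_app_left {u : Tm} (h : SN u) : ∀ t s, u = app t s → SN t := by
  induction h with
  | intro u _ ih =>
    rintro t s rfl
    constructor
    intro t' ht'
    exact ih (app t' s) (Step.appL ht') t' s rfl

lemma sn_p1_inv {u : Tm} (h : SN u) : ∀ t, u = p1 t → SN t := by
  induction h with
  | intro u _ ih =>
    rintro t rfl
    constructor
    intro t' ht'
    exact ih (p1 t') (Step.p1_cong ht') t' rfl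

end Tm

open Tm in
lemma CR (A : Ty) :
    (∀ t, Red A t → Tm.SN t) ∧ (∀ t t', Red A t → Step t t' → Red A t') ∧
    (∀ t, Neutral t → (∀ t', Step t t' → Red A t') → Red A t) := by
  induction A with
  | base =>
    refine ⟨fun t h => h, fun t t' h hs => h.inv hs, fun t _ h => ?_⟩
    constructor
    intro t' ht'
    exact h t' ht'
  | arr A B ihA ihB =>
    obtain ⟨cr1A, cr2A, cr3A⟩ := ihA
    obtain ⟨cr1B, cr2B, cr3B⟩ := ihB
    refine ⟨?_, ?_, ?_⟩
    · intro t h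
      have hx : Red A (Tm.var 0) := by
        apply cr3A
        · trivial
        intro t' ht'
        cases ht'
      have := cr1B _ (h _ hx)
      exact sn_app_left this t (Tm.var 0) rfl
    · intro t t' h hs s hsA
      exact cr2B _ _ (h s hsA) (Step.appL hs)
    · intro t hneut h s hsA
      have hsn : SN s := cr1A _ hsA
      revert hsA
      induction hsn with
      | intro s _ ihs =>
        intro hsA
        apply cr3B
        · trivial
        intro u hu
        cases hu with
        | beta t0 s => exact absurd hneut (by simp [Tm.Neutral])
        | pairApp t0 s0 u0 => exact absurd hneut (by simp [Tm.Neutral])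
        | appL hs => exact h _ hs s hsA
        | appR hs => exact ihs _ hs (cr2A _ _ hsA hs)
  | conj A B ihA ihB =>
    obtain ⟨cr1A, cr2A, cr3A⟩ := ihA
    obtain ⟨cr1B, cr2B, cr3B⟩ := ihB
    refine ⟨?_, ?_, ?_⟩
    · intro t h
      exact sn_p1_inv (cr1A _ h.1) t rfl
    · intro t t' h hs
      exact ⟨cr2A _ _ h.1 (Step.p1_cong hs), cr2B _ _ h.2 (Step.p2_cong hs)⟩
    · intro t hneut h
      constructor
      · apply cr3A
        · trivial
        intro u hu
        cases hu with
        | proj1 t1 t2 => exact absurd hneut (by simp [Tm.Neutral])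
        | projLam1 t0 => exact absurd hneut (by simp [Tm.Neutral])
        | p1_cong hs => exact (h _ hs).1
      · apply cr3B
        · trivial
        intro u hu
        cases hu with
        | proj2 t1 t2 => exact absurd hneut (by simp [Tm.Neutral])
        | projLam2 t0 => exact absurd hneut (by simp [Tm.Neutral])
        | p2_cong hs => exact (h _ hs).2

open Tm in
lemma red_steps {A : Ty} {t t' : Tm} (h : Red A t) (hs : Steps t t') : Red A t' := by
  induction hs with
  | refl => exact h
  | tail _ hstep ih => exact (CR A).2.1 _ _ ih hstep

theorem red_beta_expansion (A : Ty) (t s : Tm) (ht : t.SN) (hs : s.SN)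
    (h : Red A (t.subst1 s)) : Red A (Tm.app (Tm.lam t) s) := by
  revert s
  induction ht with
  | intro t _ iht =>
    intro s hs
    induction hs with
    | intro s hsacc ihs =>
      intro h
      apply (CR A).2.2
      · trivial
      intro u hu
      cases hu with
      | beta => exact h
      | appL hstep =>
        cases hstep with
        | lam_cong ht' =>
          exact iht _ ht' _ (Acc.intro s hsacc)
            ((CR A).2.1 _ _ h (Tm.step_subst1_left s ht'))
      | appR hstep =>
        exact ihs _ hstep (red_steps h (Tm.steps_subst1_right t
          (Relation.ReflTransGen.single hstep)))
end
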